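/- Let n ≥ 2 be an integer and let x₁, …, xₙ be positive integers such that the product x₁⋯xₙ divides (x₁ + ⋯ + xₙ)². Then the integer b := (x₁ + ⋯ + xₙ)²/(x₁⋯xₙ) satisfies b ≤ n². -/

import Mathlib

private lemma ineq_case (k a b s p : ℤ) (hk : 1 ≤ k) (hb : 1 ≤ b) (hba : b ≤ a)
    (hs : 0 ≤ s) (hsk : s ≤ (k - 1) * b) (hp : 1 ≤ p) (h2a : 2 * a ≤ a + b + s) :
    (a + b + s) ^ 2 ≤ (k + 1) ^ 2 * (a * b * p) := by
  have hak : a ≤ k * b := by nlinarith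
  have h1 : (a + b + s) ^ 2 ≤ (a + k * b) ^ 2 := by nlinarith
  have h2 : (a + k * b) ^ 2 ≤ (k + 1) ^ 2 * (a * b) := by
    nlinarith [mul_nonneg (sub_nonneg.2 hba) (sub_nonneg.2 (hak.trans (by nlinarith : k * b ≤ k * k * b)))]
  nlinarith [sq_nonneg (a + k * b), mul_pos (lt_of_lt_of_le one_pos hb) (lt_of_lt_of_le one_pos (hb.trans hba))]

private lemma list_key : ∀ N : ℕ, ∀ l : List ℤ, (∀ z ∈ l, 0 < z) → 2 ≤ l.length →
    l.prod ∣ l.sum ^ 2 → l.sum ≤ (N : ℤ) → l.sum ^ 2 ≤ (l.length : ℤ) ^ 2 * l.prod := by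
  intro N
  induction N with
  | zero =>
    intro l hpos hlen _ hle
    have h0 : 0 < l.sum := List.sum_pos l hpos (by rintro rfl; simp at hlen)
    push_cast at hle
    linarith
  | succ N ih =>
    intro l hpos hlen hdvd hle
    -- sort descending
    have hperm : (l.mergeSort (fun a b => decide (b ≤ a))).Perm l :=
      List.mergeSort_perm l _
    have hsorted : (l.mergeSort (fun a b => decide (b ≤ a))).Pairwise (fun a b : ℤ => b ≤ a) := by
      have := List.pairwise_mergeSort (le := fun a b : ℤ => decide (b ≤ a))
        (fun a b c h1 h2 => by simp at *; omega)
        (fun a b => by simp; omega) l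
      simpa using this
    rw [← hperm.sum_eq, ← hperm.prod_eq, ← hperm.length_eq] at *
    set l₂ := l.mergeSort (fun a b => decide (b ≤ a)) with hl₂
    clear_value l₂
    have hpos₂ : ∀ z ∈ l₂, 0 < z := fun z hz => hpos z (hperm.mem_iff.mp hz)
    clear hperm hpos hl₂
    rcases l₂ with _ | ⟨a, _ | ⟨b, r⟩⟩
    · simp at hlen
    · simp at hlen
    have hab : b ≤ a := (List.pairwise_cons.mp hsorted).1 b (by simp)
    have har : ∀ z ∈ r, z ≤ b :=
      (List.pairwise_cons.mp (List.pairwise_cons.mp hsorted).2).1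
    have hbpos : (1:ℤ) ≤ b := hpos₂ b (by simp)
    have hapos : (1:ℤ) ≤ a := hbpos.trans hab
    have hrpos : ∀ z ∈ r, 0 < z := fun z hz => hpos₂ z (by simp [hz])
    have hspos : 0 ≤ r.sum := List.sum_nonneg fun z hz => (hrpos z hz).le
    have hppos : (1:ℤ) ≤ r.prod := List.prod_pos hrpos
    have hsk : r.sum ≤ (r.length : ℤ) * b := by
      calc r.sum ≤ r.length • b := List.sum_le_card_nsmul r b har
      _ = (r.length : ℤ) * b := by simp [nsmul_eq_mul]
    simp only [List.sum_cons, List.prod_cons, List.length_cons] at hdvd hle hlen ⊢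
    by_cases hcase : 2 * a ≤ a + (b + r.sum)
    · -- base case: use the inequality
      have hky := ineq_case ((r.length : ℤ) + 1) a b r.sum r.prod (by omega) hbpos hab
        hspos (by linarith [hsk]) hppos (by linarith)
      calc (a + (b + r.sum)) ^ 2 = (a + b + r.sum) ^ 2 := by ring
        _ ≤ ((r.length : ℤ) + 1 + 1) ^ 2 * (a * b * r.prod) := hky
        _ = ((r.length + 1 + 1 : ℕ) : ℤ) ^ 2 * (a * (b * r.prod)) := by push_cast; ring
    · -- Vieta jump on a
      obtain ⟨c, hc⟩ := hdvd
      have hQpos : 0 < b * r.prod := by nlinarith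
      have haT : b + r.sum < a := by omega
      have hTpos : 0 < b + r.sum := by omega
      have hcpos : 0 < c := by
        rcases le_or_gt c 0 with h | h
        · exfalso
          have h1 : a * (b * r.prod) * c ≤ 0 :=
            mul_nonpos_of_nonneg_of_nonpos (mul_nonneg (by linarith) hQpos.le) h
          nlinarith
        · exact h
      have haa' : a * (c * (b * r.prod) - 2 * (b + r.sum) - a) = (b + r.sum) ^ 2 := by
        linear_combination -hc
      set a' := c * (b * r.prod) - 2 * (b + r.sum) - a with ha'
      have hcq : c * (b * r.prod) = a' + 2 * (b + r.sum) + a := by rw [ha']; ring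
      have ha'pos : 0 < a' := by nlinarith [haa']
      have ha'lt : a' < a := by
        nlinarith [haa', mul_pos (show (0:ℤ) < a - (b + r.sum) by omega)
          (show (0:ℤ) < a + (b + r.sum) by omega)]
      have h1 : (a' + (b + r.sum)) ^ 2 = a' * (b * r.prod) * c := by
        linear_combination -a' * hcq - haa'
      have key := ih (a' :: b :: r)
        (by
          intro z hz
          simp only [List.mem_cons] at hz
          rcases hz with rfl | rfl | hz
          · exact ha'pos
          · omega
          · exact hrpos z hz)
        (by simp)
        (by simp only [List.sum_cons, List.prod_cons]; exact ⟨c, h1⟩)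
        (by simp only [List.sum_cons]; push_cast at hle ⊢; omega)
      simp only [List.sum_cons, List.prod_cons, List.length_cons] at key
      rw [h1] at key
      have hq2 : 0 < a' * (b * r.prod) := mul_pos ha'pos hQpos
      have hcle : c ≤ ((r.length + 1 + 1 : ℕ) : ℤ) ^ 2 := by
        exact le_of_mul_le_mul_left (by linarith [key]) hq2
      rw [hc]
      have hX : 0 < a * (b * r.prod) := mul_pos (by linarith) hQpos
      linarith [mul_le_mul_of_nonneg_left hcle hX.le]

theorem stmt_1 (n : ℕ) (hn : 2 ≤ n) (x : Fin n → ℤ) (hx : ∀ i, 0 < x i)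
    (hdvd : (∏ i, x i) ∣ (∑ i, x i) ^ 2) :
    (∑ i, x i) ^ 2 / (∏ i, x i) ≤ (n : ℤ) ^ 2 := by
  have hsum : (List.ofFn x).sum = ∑ i, x i := by rw [List.sum_ofFn]
  have hprod : (List.ofFn x).prod = ∏ i, x i := by rw [List.prod_ofFn]
  have hlen : (List.ofFn x).length = n := List.length_ofFn
  have hPpos : 0 < ∏ i, x i := Finset.prod_pos fun i _ => hx i
  have key := list_key (∑ i, x i).toNat (List.ofFn x)
    (by intro z hz; rw [List.mem_ofFn] at hz; obtain ⟨i, rfl⟩ := hz; exact hx i)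
    (by omega) (by rw [hsum, hprod]; exact hdvd)
    (by rw [hsum]; exact Int.self_le_toNat _)
  rw [hsum, hprod, hlen] at key
  obtain ⟨c, hc⟩ := hdvd
  rw [hc, Int.mul_ediv_cancel_left _ hPpos.ne']
  nlinarith
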